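/- Let S be a set and let N be a norm on ℓ∞^c(S) equivalent to the supremum norm. Then for every w ∈ ℓ∞^c(S) there exists a countable set A ⊆ S containing the support of w such that N(w + u) ≥ N(w) for every u ∈ ℓ∞^c(S) whose support is disjoint from A. -/

import Mathlib

open scoped ENNReal

/-- The space `ℓ∞^c(ι)` of bounded functions with countable support. -/
noncomputable def linftyC (ι : Type*) : Submodule ℝ (lp (fun _ : ι => ℝ) ∞) where
  carrier := {x | (Function.support (⇑x : ι → ℝ)).Countable}
  zero_mem' := by
    simp only [Set.mem_setOf_eq, lp.coeFn_zero]
    simp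
  add_mem' := by
    intro x y hx hy
    refine ((hx.union hy).mono ?_ : _)
    rw [lp.coeFn_add]
    exact Function.support_add _ _
  smul_mem' := by
    intro c x hx
    refine hx.mono ?_
    rw [lp.coeFn_smul]
    intro i hi
    exact fun h => hi (by simp [h])

/-- The space `ℓ∞^{c,F}(ι)` of finitely-valued bounded functions with countable support. -/
noncomputable def linftyCF (ι : Type*) : Submodule ℝ (lp (fun _ : ι => ℝ) ∞) where
  carrier := {x | (Function.support (⇑x : ι → ℝ)).Countable ∧ (Set.range (⇑x : ι → ℝ)).Finite}
  zero_mem' := by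
    constructor
    · simp only [Set.mem_setOf_eq, lp.coeFn_zero]
      simp
    · simp only [Set.mem_setOf_eq, lp.coeFn_zero]
      exact (Set.finite_singleton 0).subset Set.range_const_subset
  add_mem' := by
    rintro x y ⟨hx1, hx2⟩ ⟨hy1, hy2⟩
    constructor
    · refine ((hx1.union hy1).mono ?_ : _)
      rw [lp.coeFn_add]
      exact Function.support_add _ _
    · have h : Set.range (⇑(x + y) : _ → ℝ) ⊆
          Set.image2 (· + ·) (Set.range (⇑x : _ → ℝ)) (Set.range (⇑y : _ → ℝ)) := by
        rw [lp.coeFn_add]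
        rintro _ ⟨n, rfl⟩
        exact ⟨x n, ⟨n, rfl⟩, y n, ⟨n, rfl⟩, rfl⟩
      exact (Set.Finite.image2 _ hx2 hy2).subset h
  smul_mem' := by
    rintro c x ⟨hx1, hx2⟩
    constructor
    · refine hx1.mono ?_
      rw [lp.coeFn_smul]
      intro i hi
      exact fun h => hi (by simp [h])
    · have h : Set.range (⇑(c • x) : _ → ℝ) ⊆ (fun t => c • t) '' Set.range (⇑x : _ → ℝ) := by
        rw [lp.coeFn_smul]
        rintro _ ⟨n, rfl⟩
        exact ⟨x n, ⟨n, rfl⟩, rfl⟩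
      exact (hx2.image _).subset h

/-- `N` is a norm on the real vector space `Y`. -/
def IsNorm {Y : Type*} [AddCommGroup Y] [Module ℝ Y] (N : Y → ℝ) : Prop :=
  (∀ x y, N (x + y) ≤ N x + N y) ∧ (∀ (a : ℝ) (x : Y), N (a • x) = |a| * N x) ∧
    ∀ x, N x = 0 → x = 0

/-- `N` is equivalent to the ambient norm of `Y`. -/
def IsEquivToAmbientNorm {Y : Type*} [NormedAddCommGroup Y] (N : Y → ℝ) : Prop :=
  ∃ a b : ℝ, 0 < a ∧ a ≤ b ∧ ∀ x : Y, a * ‖x‖ ≤ N x ∧ N x ≤ b * ‖x‖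

/-- Let `N` be an equivalent norm on `ℓ∞^c(S)`. For every
`w ∈ ℓ∞^c(S)` there is a countable set `A ⊆ S` containing the support of `w` such
that `N (w + u) ≥ N w` whenever the support of `u` is disjoint from `A`. -/

private lemma le_add_all_pos {x y : ℝ} (h : ∀ ε : ℝ, 0 < ε → x ≤ y + ε) : x ≤ y := by
  by_contra h'
  push_neg at h'
  have := h ((x - y) / 2) (by linarith)
  linarith

set_option maxHeartbeats 1000000 in
theorem equivalent_norm_on_linftyC_forbidden_set
    (S : Type*) (N : linftyC S → ℝ) (hnorm : IsNorm N) (heq : IsEquivToAmbientNorm N)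
    (w : linftyC S) :
    ∃ A : Set S, A.Countable ∧
      Function.support (⇑(w : lp (fun _ : S => ℝ) ∞) : S → ℝ) ⊆ A ∧
      ∀ u : linftyC S,
        Disjoint (Function.support (⇑(u : lp (fun _ : S => ℝ) ∞) : S → ℝ)) A →
          N w ≤ N (w + u) := by
  classical
  obtain ⟨Ntri, Nsmul, -⟩ := hnorm
  obtain ⟨a, b, ha, hab, hN⟩ := heq
  have hN0 : ∀ x : linftyC S, 0 ≤ N x := fun x =>
    le_trans (mul_nonneg ha.le (norm_nonneg x)) (hN x).1
  have Nzero : N 0 = 0 := by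
    have := Nsmul 0 0
    simpa using this
  have Nneg : ∀ x : linftyC S, N (-x) = N x := by
    intro x
    have := Nsmul (-1) x
    simpa using this
  have Nsum : ∀ (f : ℕ → linftyC S) (t : Finset ℕ),
      N (∑ k ∈ t, f k) ≤ ∑ k ∈ t, N (f k) := by
    intro f t
    induction t using Finset.cons_induction with
    | empty => simp [Nzero]
    | cons j t hj ih =>
      rw [Finset.sum_cons, Finset.sum_cons]
      exact (Ntri _ _).trans (by linarith)
  set J : Set S → Set ℝ := fun A =>
    (fun u : linftyC S => N (w + u)) ''
      {u : linftyC S |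
        Disjoint (Function.support (⇑(u : lp (fun _ : S => ℝ) ∞) : S → ℝ)) A} with hJdef
  have hzero_mem : ∀ A : Set S, N w ∈ J A := by
    intro A
    refine ⟨0, ?_, by simp⟩
    simp only [Set.mem_setOf_eq]
    have h0 : (⇑((0 : linftyC S) : lp (fun _ : S => ℝ) ∞) : S → ℝ) = 0 := by
      rw [ZeroMemClass.coe_zero, lp.coeFn_zero]
    rw [h0]
    simp
  have hJne : ∀ A : Set S, (J A).Nonempty := fun A => ⟨N w, hzero_mem A⟩
  have hJbdd : ∀ A : Set S, BddBelow (J A) := by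
    intro A
    refine ⟨0, ?_⟩
    rintro r ⟨u, -, rfl⟩
    exact hN0 _
  set I : Set S → ℝ := fun A => sInf (J A) with hIdef
  have hIle : ∀ A : Set S, I A ≤ N w := fun A => csInf_le (hJbdd A) (hzero_mem A)
  have hImono : ∀ A B : Set S, A ⊆ B → I A ≤ I B := by
    intro A B hAB
    apply csInf_le_csInf (hJbdd A) (hJne B)
    rintro r ⟨u, huB, rfl⟩
    exact ⟨u, huB.mono_right hAB, rfl⟩
  set c : ℝ := sSup (Set.range fun A : {A : Set S // A.Countable} => I A.1) with hcdef
  have hcbdd : BddAbove (Set.range fun A : {A : Set S // A.Countable} => I A.1) := by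
    refine ⟨N w, ?_⟩
    rintro r ⟨A, rfl⟩
    exact hIle A.1
  have hIlec : ∀ A : Set S, A.Countable → I A ≤ c := fun A hA =>
    le_csSup hcbdd ⟨⟨A, hA⟩, rfl⟩
  have hAn : ∀ n : ℕ, ∃ A : {A : Set S // A.Countable}, c - 1 / ((n : ℝ) + 1) < I A.1 := by
    intro n
    have h1 : c - 1 / ((n : ℝ) + 1) < c := by
      have : (0 : ℝ) < 1 / ((n : ℝ) + 1) := by positivity
      linarith
    haveI : Nonempty {A : Set S // A.Countable} := ⟨⟨∅, Set.countable_empty⟩⟩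
    obtain ⟨r, ⟨A, rfl⟩, hr⟩ :=
      exists_lt_of_lt_csSup (Set.range_nonempty _) h1
    exact ⟨A, hr⟩
  choose g hg using hAn
  have hwsupp : (Function.support (⇑(w : lp (fun _ : S => ℝ) ∞) : S → ℝ)).Countable := w.2
  set A : Set S :=
    Function.support (⇑(w : lp (fun _ : S => ℝ) ∞) : S → ℝ) ∪ ⋃ n, (g n).1 with hAdef
  have hAc : A.Countable := hwsupp.union (Set.countable_iUnion fun n => (g n).2)
  have hcleIA : c ≤ I A := by
    apply le_add_all_pos
    intro ε hε
    obtain ⟨n, hn⟩ := exists_nat_gt (1 / ε)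
    have hn1 : 1 / ε < (n : ℝ) + 1 := hn.trans (lt_add_one _)
    have h1 : 1 / ((n : ℝ) + 1) < ε := by
      rw [div_lt_iff₀ (by positivity)]
      have h2 : 1 < ε * (1 / ε + 1) := by
        rw [mul_add, mul_one_div, div_self (ne_of_gt hε)]
        linarith
      nlinarith [mul_lt_mul_of_pos_left hn1 hε]
    have h2 : I (g n).1 ≤ I A := by
      apply hImono
      exact (Set.subset_iUnion (fun n => (g n).1) n).trans Set.subset_union_right
    have := hg n
    linarith
  have hkey : N w ≤ c := by
    apply le_add_all_pos
    intro ε hε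
    set δ : ℝ := ε / 2 with hδdef
    have hδpos : 0 < δ := by positivity
    have hex : ∀ B : {B : Set S // B.Countable}, ∃ u : linftyC S,
        Disjoint (Function.support (⇑(u : lp (fun _ : S => ℝ) ∞) : S → ℝ)) B.1 ∧
          N (w + u) < c + δ := by
      intro B
      have h1 : I B.1 < c + δ := lt_of_le_of_lt (hIlec B.1 B.2) (by linarith)
      obtain ⟨r, ⟨u, huB, rfl⟩, hr⟩ := exists_lt_of_csInf_lt (hJne B.1) h1
      exact ⟨u, huB, hr⟩
    choose pick hpick1 hpick2 using hex
    set step : {B : Set S // B.Countable} → {B : Set S // B.Countable} := fun B =>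
      ⟨B.1 ∪ Function.support (⇑((pick B : linftyC S) : lp (fun _ : S => ℝ) ∞) : S → ℝ),
        B.2.union (pick B).2⟩ with hstepdef
    set F : ℕ → {B : Set S // B.Countable} := fun n => step^[n] ⟨A, hAc⟩ with hFdef
    have hFsucc : ∀ n, F (n + 1) = step (F n) := by
      intro n
      simp only [hFdef, Function.iterate_succ_apply']
    set uu : ℕ → linftyC S := fun n => pick (F n) with huudef
    have hFsub : ∀ n, (F n).1 ⊆ (F (n + 1)).1 := by
      intro n
      rw [hFsucc]
      exact Set.subset_union_left
    have hFmono' : Monotone fun n => (F n).1 := monotone_nat_of_le_succ hFsub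
    have hFmono : ∀ m n : ℕ, m ≤ n → (F m).1 ⊆ (F n).1 := fun m n h => hFmono' h
    have hAF : ∀ n, A ⊆ (F n).1 := by
      intro n
      have h0 : (F 0).1 = A := rfl
      rw [← h0]
      exact hFmono 0 n (Nat.zero_le n)
    have hsuppF : ∀ n,
        Function.support (⇑((uu n : linftyC S) : lp (fun _ : S => ℝ) ∞) : S → ℝ) ⊆
          (F (n + 1)).1 := by
      intro n
      rw [hFsucc]
      exact Set.subset_union_right
    have hdisjF : ∀ n,
        Disjoint (Function.support (⇑((uu n : linftyC S) : lp (fun _ : S => ℝ) ∞) : S → ℝ))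
          (F n).1 := fun n => hpick1 (F n)
    have hdisjA : ∀ n,
        Disjoint (Function.support (⇑((uu n : linftyC S) : lp (fun _ : S => ℝ) ∞) : S → ℝ))
          A := fun n => (hdisjF n).mono_right (hAF n)
    have hdisj : ∀ j k : ℕ, j ≠ k →
        Disjoint (Function.support (⇑((uu j : linftyC S) : lp (fun _ : S => ℝ) ∞) : S → ℝ))
          (Function.support (⇑((uu k : linftyC S) : lp (fun _ : S => ℝ) ∞) : S → ℝ)) := by
      have key : ∀ j k : ℕ, j < k →
          Disjoint (Function.support (⇑((uu j : linftyC S) : lp (fun _ : S => ℝ) ∞) : S → ℝ))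
            (Function.support (⇑((uu k : linftyC S) : lp (fun _ : S => ℝ) ∞) : S → ℝ)) := by
        intro j k hjk
        exact ((hdisjF k).mono_right ((hsuppF j).trans (hFmono (j + 1) k hjk))).symm
      intro j k hjk
      rcases lt_or_gt_of_ne hjk with h | h
      · exact key j k h
      · exact (key k j h).symm
    have hNuk : ∀ k, N (uu k) ≤ c + δ + N w := by
      intro k
      have h1 : uu k = (w + uu k) + (-w) := by abel
      calc N (uu k) = N ((w + uu k) + (-w)) := by rw [← h1]
        _ ≤ N (w + uu k) + N (-w) := Ntri _ _
        _ = N (w + uu k) + N w := by rw [Nneg]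
        _ ≤ c + δ + N w := by linarith [(hpick2 (F k)).le]
    set M : ℝ := (c + δ + N w) / a with hMdef
    have hnorm_uk : ∀ k, ‖uu k‖ ≤ M := by
      intro k
      rw [hMdef, le_div_iff₀ ha]
      have h1 := (hN (uu k)).1
      have h2 := hNuk k
      nlinarith
    have hM0 : 0 ≤ M := le_trans (norm_nonneg (uu 0)) (hnorm_uk 0)
    have hsum_norm : ∀ n : ℕ, ‖(∑ k ∈ Finset.range n, uu k : linftyC S)‖ ≤ M := by
      intro n
      rw [← Submodule.norm_coe, Submodule.coe_sum]
      apply lp.norm_le_of_forall_le hM0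
      intro i
      rw [lp.coeFn_sum, Finset.sum_apply]
      by_cases hall : ∀ k ∈ Finset.range n, ((uu k : linftyC S) : lp (fun _ : S => ℝ) ∞) i = 0
      · rw [Finset.sum_eq_zero hall]
        simpa using hM0
      · push_neg at hall
        obtain ⟨j, hj, hji⟩ := hall
        have hsum : ∑ k ∈ Finset.range n, ((uu k : linftyC S) : lp (fun _ : S => ℝ) ∞) i =
            ((uu j : linftyC S) : lp (fun _ : S => ℝ) ∞) i := by
          apply Finset.sum_eq_single_of_mem j hj
          intro k hk hkj
          by_contra hki
          have h1 : i ∈ Function.support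
              (⇑((uu k : linftyC S) : lp (fun _ : S => ℝ) ∞) : S → ℝ) := hki
          have h2 : i ∈ Function.support
              (⇑((uu j : linftyC S) : lp (fun _ : S => ℝ) ∞) : S → ℝ) := hji
          exact Set.disjoint_left.mp (hdisj k j hkj) h1 h2
        rw [hsum]
        calc ‖((uu j : linftyC S) : lp (fun _ : S => ℝ) ∞) i‖
            ≤ ‖((uu j : linftyC S) : lp (fun _ : S => ℝ) ∞)‖ :=
              lp.norm_apply_le_norm ENNReal.top_ne_zero _ i
          _ = ‖uu j‖ := (Submodule.norm_coe _)
          _ ≤ M := hnorm_uk j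
    obtain ⟨n, hn⟩ := exists_nat_gt (b * M / δ)
    set m : ℕ := n + 1 with hmdef
    have hmpos : (0 : ℝ) < (m : ℝ) := by positivity
    have hbM : b * M / (m : ℝ) < δ := by
      rw [div_lt_iff₀ hmpos]
      have h1 : b * M / δ < (m : ℝ) := by
        push_cast
        exact hn.trans (by rw [hmdef]; push_cast; exact lt_add_one _)
      have h2 := (div_lt_iff₀ hδpos).mp h1
      linarith
    set v : linftyC S := ((m : ℝ))⁻¹ • (∑ k ∈ Finset.range m, uu k) with hvdef
    have hwv : w + v = ((m : ℝ))⁻¹ • (∑ k ∈ Finset.range m, (w + uu k)) := by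
      rw [Finset.sum_add_distrib, Finset.sum_const, Finset.card_range, smul_add,
        ← Nat.cast_smul_eq_nsmul ℝ m w, inv_smul_smul₀ (ne_of_gt hmpos)]
    have hNwv : N (w + v) ≤ c + δ := by
      have h1 : N (w + v) = |((m : ℝ))⁻¹| * N (∑ k ∈ Finset.range m, (w + uu k)) := by
        rw [hwv, Nsmul]
      rw [h1, abs_of_nonneg (by positivity)]
      have h2 : N (∑ k ∈ Finset.range m, (w + uu k)) ≤ (m : ℝ) * (c + δ) := by
        calc N (∑ k ∈ Finset.range m, (w + uu k))
            ≤ ∑ k ∈ Finset.range m, N (w + uu k) := Nsum _ _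
          _ ≤ ∑ _k ∈ Finset.range m, (c + δ) := by
              apply Finset.sum_le_sum
              intro k _
              exact (hpick2 (F k)).le
          _ = (m : ℝ) * (c + δ) := by
              rw [Finset.sum_const, Finset.card_range, nsmul_eq_mul]
      calc ((m : ℝ))⁻¹ * N (∑ k ∈ Finset.range m, (w + uu k))
          ≤ ((m : ℝ))⁻¹ * ((m : ℝ) * (c + δ)) := by
            apply mul_le_mul_of_nonneg_left h2 (by positivity)
        _ = c + δ := by
            rw [← mul_assoc, inv_mul_cancel₀ (ne_of_gt hmpos), one_mul]
    have hNv : N v ≤ b * M / (m : ℝ) := by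
      have h1 : N v = |((m : ℝ))⁻¹| * N (∑ k ∈ Finset.range m, uu k) := by
        rw [hvdef, Nsmul]
      rw [h1, abs_of_nonneg (by positivity)]
      have h2 : N (∑ k ∈ Finset.range m, uu k) ≤ b * M := by
        have h3 := (hN (∑ k ∈ Finset.range m, uu k)).2
        have h4 := hsum_norm m
        have hb : 0 ≤ b := le_trans ha.le hab
        nlinarith
      rw [div_eq_inv_mul]
      exact mul_le_mul_of_nonneg_left h2 (by positivity)
    have hfinal : N w ≤ N (w + v) + N v := by
      have h1 : w = (w + v) + (-v) := by abel
      calc N w = N ((w + v) + (-v)) := by rw [← h1]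
        _ ≤ N (w + v) + N (-v) := Ntri _ _
        _ = N (w + v) + N v := by rw [Nneg]
    have : N w ≤ c + δ + δ := by linarith
    linarith [this, hδdef ▸ (by linarith : c + ε / 2 + ε / 2 = c + ε)]
  refine ⟨A, hAc, Set.subset_union_left, ?_⟩
  intro u hu
  have h1 : N (w + u) ∈ J A := ⟨u, hu, rfl⟩
  have h2 : I A ≤ N (w + u) := csInf_le (hJbdd A) h1
  linarith
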